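/- With F and S_α as defined above (F(X) containing (n,δ) iff δ = 0, or δ = γ+1 and (0,γ) ∈ X, or δ a nonzero limit and (0, δ_m) ∈ X for all m ≥ n, using fixed cofinal ω-chains (δ_m) in each nonzero countable limit δ), the map F converges to its least fixed point in exactly ω₁ steps: F^{ω₁}(∅) = ω × ω₁ is the least fixed point of F, and F^α(∅) ⊊ F^{α+1}(∅) for every α < ω₁. -/

import Mathlib

open Set

universe u v

/-- Ordinal-indexed iterates of a map on a powerset, starting from ∅,
taking unions at limit stages. -/
noncomputable def iter {A : Type u} (f : Set A → Set A) (o : Ordinal.{v}) : Set A :=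
  Ordinal.limitRecOn o ∅ (fun _ ih => f ih)
    (fun o _ ih => ⋃ (b : Ordinal.{v}) (h : b < o), ih b h)

/-- The least uncountable ordinal. -/
noncomputable def omega1 : Ordinal.{0} := (Cardinal.aleph 1).ord

/-- The set S_α = { (n, δ) : n < ω, δ < α } of the paper's model M_{ω₁}. -/
def Sset (α : Ordinal.{0}) : Set (ℕ × Ordinal.{0}) := {p | p.2 < α}

/-- The semantic action of the formula (ν_z.◇_v x ∧ ◇_h z) ∨ □_v ⊥ on M_{ω₁},
where `c δ` enumerates the chosen cofinal ω-chain in the limit ordinal δ. -/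
def Fop (c : Ordinal.{0} → ℕ → Ordinal.{0}) (X : Set (ℕ × Ordinal.{0})) :
    Set (ℕ × Ordinal.{0}) :=
  {p | p.2 < omega1 ∧ (p.2 = 0 ∨ (∃ γ, p.2 = γ + 1 ∧ (0, γ) ∈ X) ∨
    (Order.IsSuccLimit p.2 ∧ ∀ m ≥ p.1, (0, c p.2 m) ∈ X))}

lemma omega1_isLimit : Order.IsSuccLimit omega1 :=
  Cardinal.isSuccLimit_ord (Cardinal.aleph0_le_aleph 1)

lemma iter_zero {A : Type u} (f : Set A → Set A) : iter f (0 : Ordinal.{v}) = ∅ :=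
  Ordinal.limitRecOn_zero _ _ _

lemma iter_succ {A : Type u} (f : Set A → Set A) (o : Ordinal.{v}) :
    iter f (o + 1) = f (iter f o) := by
  rw [iter, Ordinal.add_one_eq_succ, Ordinal.limitRecOn_succ]; rfl

lemma iter_limit {A : Type u} (f : Set A → Set A) (o : Ordinal.{v}) (h : Order.IsSuccLimit o) :
    iter f o = ⋃ (b : Ordinal.{v}) (_ : b < o), iter f b :=
  Ordinal.limitRecOn_limit _ _ _ _ h

section main

variable (c : Ordinal.{0} → ℕ → Ordinal.{0})
    (hmono : ∀ δ, Order.IsSuccLimit δ → δ < omega1 → ∀ m, c δ m ≤ c δ (m + 1))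
    (hlt : ∀ δ, Order.IsSuccLimit δ → δ < omega1 → ∀ m, c δ m < δ)
    (hcof : ∀ δ, Order.IsSuccLimit δ → δ < omega1 → ∀ γ < δ, ∃ m, γ ≤ c δ m)

include hmono hlt hcof

lemma Fop_Sset_lt (α : Ordinal.{0}) (hα : α < omega1) :
    Fop c (Sset α) = Sset (α + 1) := by
  ext ⟨n, δ⟩
  simp only [Fop, Sset, mem_setOf_eq]
  constructor
  · rintro ⟨hδ, h0 | ⟨γ, rfl, hγ⟩ | ⟨hlim, hall⟩⟩
    · rw [h0]; exact lt_of_le_of_lt (zero_le (a := α)) (lt_add_one α)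
    · rw [Ordinal.add_one_eq_succ, Ordinal.add_one_eq_succ]
      exact Order.succ_lt_succ hγ
    · have hle : δ ≤ α := by
        by_contra hc
        push_neg at hc
        -- α < δ, find m with α ≤ c δ m
        obtain ⟨m, hm⟩ := hcof δ hlim hδ α hc
        have hmn : c δ m ≤ c δ (max m n) := by
          have : Monotone (c δ) := monotone_nat_of_le_succ (hmono δ hlim hδ)
          exact this (le_max_left m n)
        have := hall (max m n) (le_max_right m n)
        exact absurd (lt_of_le_of_lt (hm.trans hmn) this) (lt_irrefl α).elim
      exact lt_of_le_of_lt hle (lt_add_one α)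
  · intro hδ
    have hδ1 : δ ≤ α := Order.lt_add_one_iff.mp hδ
    have hδω : δ < omega1 := lt_of_le_of_lt hδ1 hα
    refine ⟨hδω, ?_⟩
    rcases Ordinal.zero_or_succ_or_isSuccLimit δ with h0 | ⟨γ, rfl⟩ | hlim
    · exact Or.inl h0
    · exact Or.inr (Or.inl ⟨γ, by rw [Ordinal.add_one_eq_succ],
        lt_of_lt_of_le (Order.lt_succ γ) hδ1⟩)
    · exact Or.inr (Or.inr ⟨hlim, fun m _ =>
        lt_of_lt_of_le (hlt δ hlim hδω m) hδ1⟩)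

lemma Fop_Sset_omega1 : Fop c (Sset omega1) = Sset omega1 := by
  ext ⟨n, δ⟩
  simp only [Fop, Sset, mem_setOf_eq]
  constructor
  · rintro ⟨hδ, _⟩; exact hδ
  · intro hδ
    refine ⟨hδ, ?_⟩
    rcases Ordinal.zero_or_succ_or_isSuccLimit δ with h0 | ⟨γ, rfl⟩ | hlim
    · exact Or.inl h0
    · exact Or.inr (Or.inl ⟨γ, by rw [Ordinal.add_one_eq_succ],
        lt_trans (Order.lt_succ γ) (by rwa [← Ordinal.add_one_eq_succ])⟩)
    · exact Or.inr (Or.inr ⟨hlim, fun m _ => lt_trans (hlt δ hlim hδ m) hδ⟩)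

lemma iter_eq_Sset : ∀ α ≤ omega1, iter (Fop c) α = Sset α := by
  intro α
  induction α using Ordinal.limitRecOn with
  | zero =>
    intro _
    rw [iter_zero]
    ext p; simp [Sset, not_lt_zero]
  | add_one β ih =>
    intro hβ
    have hβlt : β < omega1 := lt_of_lt_of_le (lt_add_one β) hβ
    rw [iter_succ, ih hβlt.le,
      Fop_Sset_lt c hmono hlt hcof β hβlt]
  | limit β hβlim ih =>
    intro hβ
    rw [iter_limit _ _ hβlim]
    ext p
    simp only [mem_iUnion, Sset, mem_setOf_eq]
    constructor
    · rintro ⟨b, hb, hp⟩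
      rw [ih b hb (hb.le.trans hβ)] at hp
      exact lt_trans hp hb
    · intro hp
      refine ⟨p.2 + 1, hβlim.succ_lt hp, ?_⟩
      rw [ih (p.2 + 1) (hβlim.succ_lt hp) ((hβlim.succ_lt hp).le.trans hβ)]
      exact lt_add_one p.2

end main

theorem stmt15 (c : Ordinal.{0} → ℕ → Ordinal.{0})
    (hmono : ∀ δ, Order.IsSuccLimit δ → δ < omega1 → ∀ m, c δ m ≤ c δ (m + 1))
    (hlt : ∀ δ, Order.IsSuccLimit δ → δ < omega1 → ∀ m, c δ m < δ)
    (hcof : ∀ δ, Order.IsSuccLimit δ → δ < omega1 → ∀ γ < δ, ∃ m, γ ≤ c δ m) :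
    iter (Fop c) omega1 = Sset omega1 ∧
      Fop c (iter (Fop c) omega1) = iter (Fop c) omega1 ∧
      (∀ X, Fop c X ⊆ X → iter (Fop c) omega1 ⊆ X) ∧
      (∀ α < omega1, iter (Fop c) α ⊂ iter (Fop c) (α + 1)) := by
  have key := iter_eq_Sset c hmono hlt hcof
  have h1 : iter (Fop c) omega1 = Sset omega1 := key omega1 le_rfl
  refine ⟨h1, by rw [h1]; exact Fop_Sset_omega1 c hmono hlt hcof, ?_, ?_⟩
  · intro X hX
    rw [h1]
    have main : ∀ δ : Ordinal.{0}, δ < omega1 → ∀ n : ℕ, (n, δ) ∈ X := by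
      intro δ
      induction δ using Ordinal.induction with
      | h δ ih =>
        intro hδ n
        apply hX
        refine ⟨hδ, ?_⟩
        rcases Ordinal.zero_or_succ_or_isSuccLimit δ with h0 | ⟨γ, rfl⟩ | hlim
        · exact Or.inl h0
        · exact Or.inr (Or.inl ⟨γ, by rw [Ordinal.add_one_eq_succ],
            ih γ (by rw [← Ordinal.add_one_eq_succ]; exact lt_add_one γ)
              (lt_trans (by rw [← Ordinal.add_one_eq_succ]; exact lt_add_one γ) hδ) 0⟩)
        · exact Or.inr (Or.inr ⟨hlim, fun m _ =>
            ih (c δ m) (hlt δ hlim hδ m) (lt_trans (hlt δ hlim hδ m) hδ) 0⟩)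
    rintro ⟨n, δ⟩ hp
    exact main δ hp n
  · intro α hα
    have hα1 : α + 1 ≤ omega1 := by
      rw [Ordinal.add_one_eq_succ]; exact (omega1_isLimit.succ_lt hα).le
    rw [key α hα.le, key (α + 1) hα1]
    constructor
    · intro p hp; exact lt_trans hp (lt_add_one α)
    · intro hsub
      have : (0, α) ∈ Sset (α + 1) := lt_add_one α
      exact absurd (hsub this) (lt_irrefl α)
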